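/- Consider model (8) (m₂₁ = m₃₁ = 0, all other parameters positive). The point M₂ = (k₁, 0, 0) is an equilibrium; the Jacobian there has one eigenvalue equal to −r₁, and the other two eigenvalues are those of the 2×2 matrix B = [[r₂ − m₁₂ − m₃₂, m₂₃], [m₃₂, r₃ − m₁₃ − m₂₃]]. Both eigenvalues of B have negative real part if and only if r₂ + r₃ < m₁₂ + m₃₂ + m₁₃ + m₂₃ and (r₂ − m₁₂)(r₃ − m₁₃) > (r₂ − m₁₂)m₂₃ + (r₃ − m₁₃)m₃₂. -/

import Mathlib

open Matrix

private lemma mem_spec_iff_det' {n : ℕ} (M : Matrix (Fin n) (Fin n) ℂ) (z : ℂ) :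
    z ∈ spectrum ℂ M ↔ (z • (1 : Matrix (Fin n) (Fin n) ℂ) - M).det = 0 := by
  rw [spectrum.mem_iff, Matrix.isUnit_iff_isUnit_det, isUnit_iff_ne_zero, not_not,
    Algebra.algebraMap_eq_smul_one]

private lemma quad_root_re' {T D : ℝ} (x : ℝ)
    (hx : x ^ 2 - T * x + D = 0) : ((x : ℂ) ^ 2 - (T : ℂ) * x + (D : ℂ) = 0) := by
  exact_mod_cast congrArg Complex.ofReal hx

private lemma quad_iff' (T D : ℝ) :
    (∀ z : ℂ, z ^ 2 - (T : ℂ) * z + (D : ℂ) = 0 → z.re < 0) ↔ (T < 0 ∧ 0 < D) := by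
  constructor
  · intro h
    rcases le_or_gt 0 (T ^ 2 - 4 * D) with hΔ | hΔ
    · set s := Real.sqrt (T ^ 2 - 4 * D) with hsdef
      have hs : s ^ 2 = T ^ 2 - 4 * D := Real.sq_sqrt hΔ
      have hs0 : 0 ≤ s := Real.sqrt_nonneg _
      have h1 := h _ (quad_root_re' ((T + s) / 2) (by nlinarith [hs]))
      have h2 := h _ (quad_root_re' ((T - s) / 2) (by nlinarith [hs]))
      simp [Complex.ofReal_re] at h1 h2
      constructor
      · linarith
      · nlinarith [mul_pos (by linarith : (0:ℝ) < -((T+s)/2)) (by linarith : (0:ℝ) < -((T-s)/2))]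
    · set s := Real.sqrt (4 * D - T ^ 2) with hsdef
      have hs : s ^ 2 = 4 * D - T ^ 2 := Real.sq_sqrt (by linarith)
      have hroot : ((T / 2 : ℝ) + (s / 2 : ℝ) * Complex.I) ^ 2
          - (T : ℂ) * ((T / 2 : ℝ) + (s / 2 : ℝ) * Complex.I) + (D : ℂ) = 0 := by
        have hI : (Complex.I) ^ 2 = -1 := Complex.I_sq
        have hr : ((T / 2) ^ 2 - (s / 2) ^ 2 - T * (T / 2) + D : ℝ) = 0 := by nlinarith [hs]
        have := congrArg (Complex.ofReal) hr
        push_cast at this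
        push_cast
        linear_combination this + ((s:ℂ)/2)^2 * hI
      have h3 := h _ hroot
      simp [Complex.add_re, Complex.ofReal_re, Complex.mul_re] at h3
      constructor
      · linarith
      · nlinarith
  · rintro ⟨hT, hD⟩ z hz
    have hre := congrArg Complex.re hz
    have him := congrArg Complex.im hz
    simp [pow_two, Complex.mul_re, Complex.mul_im] at hre him
    rcases eq_or_ne z.im 0 with h0 | h0
    · rw [h0] at hre
      nlinarith [hre]
    · have hfac : z.im * (2 * z.re - T) = 0 := by linear_combination him
      rcases mul_eq_zero.mp hfac with h | h
      · exact absurd h h0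
      · linarith

open Matrix in
/-- Model (8) (`m₂₁ = m₃₁ = 0`): `M₂ = (k₁, 0, 0)` is an equilibrium; the
Jacobian there has eigenvalue `−r₁` together with the eigenvalues of the
2×2 block `B`, and both eigenvalues of `B` have negative real part iff
`r₂ + r₃ < m₁₂ + m₃₂ + m₁₃ + m₂₃` and
`(r₂ − m₁₂)(r₃ − m₁₃) > (r₂ − m₁₂)m₂₃ + (r₃ − m₁₃)m₃₂`. -/
theorem model8_M2_stability
    (r₁ r₂ r₃ k₁ k₂ k₃ m₁₂ m₁₃ m₂₃ m₃₂ : ℝ)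
    (hr₁ : 0 < r₁) (hr₂ : 0 < r₂) (hr₃ : 0 < r₃)
    (hk₁ : 0 < k₁) (hk₂ : 0 < k₂) (hk₃ : 0 < k₃)
    (hm₁₂ : 0 < m₁₂) (hm₁₃ : 0 < m₁₃) (hm₂₃ : 0 < m₂₃) (hm₃₂ : 0 < m₃₂)
    (J : Matrix (Fin 3) (Fin 3) ℝ)
    (hJ : J = !![-r₁, m₁₂, m₁₃;
                 0, r₂ - m₁₂ - m₃₂, m₂₃;
                 0, m₃₂, r₃ - m₁₃ - m₂₃])
    (B : Matrix (Fin 2) (Fin 2) ℝ)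
    (hB : B = !![r₂ - m₁₂ - m₃₂, m₂₃;
                 m₃₂, r₃ - m₁₃ - m₂₃]) :
    (r₁ * k₁ * (1 - k₁ / k₁) + m₁₂ * 0 + m₁₃ * 0 = 0 ∧
     r₂ * 0 * (1 - 0 / k₂) - (m₁₂ + m₃₂) * 0 + m₂₃ * 0 = 0 ∧
     r₃ * 0 * (1 - 0 / k₃) + m₃₂ * 0 - (m₁₃ + m₂₃) * 0 = 0) ∧
    spectrum ℂ (J.map (Complex.ofReal))
      = insert (-r₁ : ℂ) (spectrum ℂ (B.map (Complex.ofReal))) ∧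
    ((∀ μ ∈ spectrum ℂ (B.map (Complex.ofReal)), μ.re < 0) ↔
      (r₂ + r₃ < m₁₂ + m₃₂ + m₁₃ + m₂₃ ∧
       (r₂ - m₁₂) * m₂₃ + (r₃ - m₁₃) * m₃₂ < (r₂ - m₁₂) * (r₃ - m₁₃))) := by
  have hk₁' : k₁ ≠ 0 := ne_of_gt hk₁
  set a : ℝ := r₂ - m₁₂ - m₃₂ with ha
  set b : ℝ := r₃ - m₁₃ - m₂₃ with hb
  have hBspec : ∀ z : ℂ, z ∈ spectrum ℂ (B.map (Complex.ofReal)) ↔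
      z ^ 2 - ((a + b : ℝ) : ℂ) * z + ((a * b - m₂₃ * m₃₂ : ℝ) : ℂ) = 0 := by
    intro z
    rw [hB, mem_spec_iff_det']
    rw [Matrix.det_fin_two]
    simp only [Matrix.smul_apply, Matrix.one_apply, Matrix.sub_apply, Matrix.map_apply,
      Matrix.of_apply, Matrix.cons_val', Matrix.cons_val_zero, Matrix.cons_val_one,
      Matrix.head_cons, Matrix.head_fin_const, Matrix.empty_val', Matrix.cons_val_fin_one,
      Fin.isValue, if_true, if_false, ne_eq, zero_ne_one, one_ne_zero, smul_eq_mul,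
      mul_one, mul_zero, ite_true, ite_false, Matrix.one_apply_eq, Matrix.one_apply_ne]
    constructor <;> intro h
    · push_cast
      linear_combination h
    · push_cast at h
      linear_combination h
  refine ⟨⟨by field_simp; ring, by ring, by ring⟩, ?_, ?_⟩
  · ext z
    rw [mem_spec_iff_det', Set.mem_insert_iff]
    have hdet : (z • (1 : Matrix (Fin 3) (Fin 3) ℂ) - (J.map Complex.ofReal)).det
        = (z + r₁) * ((z - (a : ℂ)) * (z - (b : ℂ)) - (m₂₃ : ℂ) * (m₃₂ : ℂ)) := by
      rw [hJ, Matrix.det_fin_three]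
      simp [Matrix.smul_apply, Matrix.one_apply, Matrix.vecHead, Matrix.vecTail]
      ring
    rw [hdet, mul_eq_zero, hBspec z]
    constructor <;> rintro (h | h)
    · left; linear_combination h
    · right; push_cast; linear_combination h
    · left; linear_combination h
    · right; push_cast at h; linear_combination h
  · have := quad_iff' (a + b) (a * b - m₂₃ * m₃₂)
    constructor
    · intro h
      have hq : (a + b < 0 ∧ 0 < a * b - m₂₃ * m₃₂) := by
        apply this.mp
        intro z hz
        exact h z ((hBspec z).mpr hz)
      constructor
      · linarith [hq.1]
      · nlinarith [hq.2]
    · rintro ⟨h1, h2⟩ μ hμ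
      apply this.mpr ⟨by linarith, by nlinarith⟩
      exact (hBspec μ).mp hμ
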